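/- arXiv:2511.19942 — 7 statements merged into one kernel-verified Lean document; each statement's English description precedes it below -/
import Mathlib

section
/- Let π_base be a full-support probability distribution on a finite set T, r : T → ℝ a reward, γ ≥ 0 an entropy coefficient, and β > 0. Then the distribution π*(τ) = [π_base(τ)]^{1−γ/β}·exp(r(τ)/β) / Z, with Z = Σ_{τ'} [π_base(τ')]^{1−γ/β}·exp(r(τ')/β), is the unique maximizer over probability distributions π on T of E_{τ∼π}[r(τ) − γ·log π_base(τ)] − β·KL(π‖π_base). -/
open Real Finset

private lemma term_ineq {p q : ℝ} (hp : 0 ≤ p) (hq : 0 < q) :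
    p - q ≤ p * Real.log (p / q) := by
  rcases eq_or_lt_of_le hp with h | h
  · simp [← h]; linarith
  · have hx : 0 < q / p := div_pos hq h
    have h1 : Real.log (q / p) ≤ q / p - 1 := Real.log_le_sub_one_of_pos hx
    have hl : Real.log (p / q) = - Real.log (q / p) := by
      rw [← Real.log_inv, inv_div]
    have h2 : p * (q / p) = q := by field_simp
    rw [hl]
    nlinarith
  
private lemma term_eq {p q : ℝ} (hp : 0 ≤ p) (hq : 0 < q)
    (h : p * Real.log (p / q) = p - q) : p = q := by
  rcases eq_or_lt_of_le hp with h0 | h0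
  · exfalso; rw [← h0] at h; simp at h; linarith
  · by_contra hne
    have hx : 0 < q / p := div_pos hq h0
    have hxne : q / p - 1 ≠ 0 := by
      intro hc
      apply hne
      have : q / p = 1 := by linarith
      field_simp at this; linarith
    have hlt : (q / p - 1) + 1 < Real.exp (q / p - 1) := Real.add_one_lt_exp hxne
    have hlog : Real.log (q / p) = q / p - 1 := by
      have hl : Real.log (q / p) = - Real.log (p / q) := by
        rw [← Real.log_inv, inv_div]
      have hlpq : Real.log (p / q) = (p - q) / p := by
        field_simp at h ⊢
        nlinarith [h]
      rw [hl, hlpq]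
      field_simp
      ring
    have : Real.exp (q / p - 1) = q / p := by rw [← hlog, Real.exp_log hx]
    rw [this] at hlt
    linarith

private lemma gibbs {T : Type*} [Fintype T] (p q : T → ℝ) (hp : ∀ τ, 0 ≤ p τ)
    (hq : ∀ τ, 0 < q τ) (hp1 : ∑ τ, p τ = 1) (hq1 : ∑ τ, q τ = 1) :
    0 ≤ ∑ τ, p τ * Real.log (p τ / q τ) ∧
      (∑ τ, p τ * Real.log (p τ / q τ) = 0 → p = q) := by
  have hterm : ∀ τ ∈ Finset.univ, p τ - q τ ≤ p τ * Real.log (p τ / q τ) :=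
    fun τ _ => term_ineq (hp τ) (hq τ)
  have hsum0 : ∑ τ, (p τ - q τ) = 0 := by
    rw [Finset.sum_sub_distrib, hp1, hq1]; ring
  constructor
  · calc (0:ℝ) = ∑ τ, (p τ - q τ) := hsum0.symm
      _ ≤ _ := Finset.sum_le_sum hterm
  · intro heq
    have hall := (Finset.sum_eq_sum_iff_of_le hterm).mp (by rw [heq, hsum0])
    funext τ
    exact term_eq (hp τ) (hq τ) ((hall τ (Finset.mem_univ τ)).symm)

/-- The tilted distribution `pb(τ)^(1−γ/β)·exp(r(τ)/β)/Z` is the unique maximizer of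
`E_{τ∼p}[r(τ) − γ·log pb(τ)] − β·KL(p‖pb)`. -/
theorem stmt3 {T : Type*} [Fintype T] (pb : T → ℝ) (hpos : ∀ τ, 0 < pb τ)
    (hsum : ∑ τ, pb τ = 1) (r : T → ℝ) (γ β : ℝ) (hγ : 0 ≤ γ) (hβ : 0 < β)
    (Z : ℝ) (hZ : Z = ∑ τ', pb τ' ^ (1 - γ / β) * Real.exp (r τ' / β))
    (ps : T → ℝ) (hps : ∀ τ, ps τ = pb τ ^ (1 - γ / β) * Real.exp (r τ / β) / Z) :
    (∀ p : T → ℝ, (∀ τ, 0 ≤ p τ) → (∑ τ, p τ) = 1 →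
      (∑ τ, p τ * (r τ - γ * Real.log (pb τ))) -
        β * (∑ τ, p τ * Real.log (p τ / pb τ)) ≤
      (∑ τ, ps τ * (r τ - γ * Real.log (pb τ))) -
        β * (∑ τ, ps τ * Real.log (ps τ / pb τ))) ∧
    (∀ p : T → ℝ, (∀ τ, 0 ≤ p τ) → (∑ τ, p τ) = 1 →
      (∑ τ, p τ * (r τ - γ * Real.log (pb τ))) -
        β * (∑ τ, p τ * Real.log (p τ / pb τ)) =
      (∑ τ, ps τ * (r τ - γ * Real.log (pb τ))) -
        β * (∑ τ, ps τ * Real.log (ps τ / pb τ)) → p = ps) := by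
  have hne : Nonempty T := by
    rcases isEmpty_or_nonempty T with h | h
    · simp [Finset.univ_eq_empty] at hsum
    · exact h
  have hZpos : 0 < Z := by
    rw [hZ]
    exact Finset.sum_pos (fun τ _ => mul_pos (Real.rpow_pos_of_pos (hpos τ) _)
      (Real.exp_pos _)) Finset.univ_nonempty
  have hps_pos : ∀ τ, 0 < ps τ := by
    intro τ
    rw [hps τ]
    exact div_pos (mul_pos (Real.rpow_pos_of_pos (hpos τ) _) (Real.exp_pos _)) hZpos
  have hps_sum : ∑ τ, ps τ = 1 := by
    simp only [hps]
    rw [← Finset.sum_div, ← hZ, div_self hZpos.ne']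
  have hlogps : ∀ τ, Real.log (ps τ) =
      (1 - γ / β) * Real.log (pb τ) + r τ / β - Real.log Z := by
    intro τ
    rw [hps τ, Real.log_div (mul_pos (Real.rpow_pos_of_pos (hpos τ) _)
      (Real.exp_pos _)).ne' hZpos.ne',
      Real.log_mul (Real.rpow_pos_of_pos (hpos τ) _).ne' (Real.exp_pos _).ne',
      Real.log_rpow (hpos τ), Real.log_exp]
  have hobj : ∀ τ, r τ - γ * Real.log (pb τ) =
      β * (Real.log (ps τ) - Real.log (pb τ)) + β * Real.log Z := by
    intro τ
    rw [hlogps τ]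
    field_simp
    ring
  -- key identity: objective = β log Z - β KL(p‖ps)
  have key : ∀ p : T → ℝ, (∀ τ, 0 ≤ p τ) → (∑ τ, p τ) = 1 →
      (∑ τ, p τ * (r τ - γ * Real.log (pb τ))) -
        β * (∑ τ, p τ * Real.log (p τ / pb τ)) =
      β * Real.log Z - β * (∑ τ, p τ * Real.log (p τ / ps τ)) := by
    intro p hp hp1
    have hterm : ∀ τ, p τ * (r τ - γ * Real.log (pb τ)) -
        β * (p τ * Real.log (p τ / pb τ)) =
        β * Real.log Z * p τ - β * (p τ * Real.log (p τ / ps τ)) := by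
      intro τ
      rcases eq_or_lt_of_le (hp τ) with h0 | h0
      · simp [← h0]
      · rw [hobj τ, Real.log_div h0.ne' (hpos τ).ne', Real.log_div h0.ne' (hps_pos τ).ne']
        ring
    calc (∑ τ, p τ * (r τ - γ * Real.log (pb τ))) -
          β * (∑ τ, p τ * Real.log (p τ / pb τ))
        = ∑ τ, (p τ * (r τ - γ * Real.log (pb τ)) -
            β * (p τ * Real.log (p τ / pb τ))) := by
          rw [Finset.sum_sub_distrib, Finset.mul_sum]
      _ = ∑ τ, (β * Real.log Z * p τ - β * (p τ * Real.log (p τ / ps τ))) :=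
          Finset.sum_congr rfl fun τ _ => hterm τ
      _ = β * Real.log Z - β * (∑ τ, p τ * Real.log (p τ / ps τ)) := by
          rw [Finset.sum_sub_distrib, ← Finset.mul_sum, hp1, ← Finset.mul_sum]
          ring
  have hps_self : (∑ τ, ps τ * Real.log (ps τ / ps τ)) = 0 := by
    apply Finset.sum_eq_zero
    intro τ _
    rw [div_self (hps_pos τ).ne', Real.log_one, mul_zero]
  have hFps : (∑ τ, ps τ * (r τ - γ * Real.log (pb τ))) -
      β * (∑ τ, ps τ * Real.log (ps τ / pb τ)) = β * Real.log Z := by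
    rw [key ps (fun τ => (hps_pos τ).le) hps_sum, hps_self]
    ring
  constructor
  · intro p hp hp1
    rw [key p hp hp1, hFps]
    have := (gibbs p ps hp hps_pos hp1 hps_sum).1
    nlinarith
  · intro p hp hp1 heq
    rw [key p hp hp1, hFps] at heq
    have hKL : (∑ τ, p τ * Real.log (p τ / ps τ)) = 0 := by
      have h2 : β * (∑ τ, p τ * Real.log (p τ / ps τ)) = 0 := by linarith
      exact (mul_eq_zero.mp h2).resolve_left hβ.ne'
    exact (gibbs p ps hp hps_pos hp1 hps_sum).2 hKL
end

section
/- Let T be a finite set, π_base a full-support distribution on T, C ⊆ T with both C and T\C nonempty, binary reward r(τ) = 1 if τ ∈ C else 0, γ̃ ≥ 0, and β > 0. Let π_ent(τ) ∝ π_base(τ)^{1−γ̃}·exp(r(τ)/β) (entropy-modified policy) and π_DS(τ) ∝ π_base(τ)^{1−γ̃·1[τ∈C]}·exp(r(τ)/β) (differential policy). If β is chosen for each policy so that both achieve the same correctness C* = Σ_{τ∈C} π(τ) ∈ (0,1), then KL(π_base‖π_DS) ≤ KL(π_base‖π_ent). -/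
lemma jensen_log {ι : Type*} (s : Finset ι) (w x : ι → ℝ)
    (hw : ∀ i ∈ s, 0 ≤ w i) (hw1 : ∑ i ∈ s, w i = 1)
    (hx : ∀ i ∈ s, 0 < x i) :
    ∑ i ∈ s, w i * Real.log (x i) ≤ Real.log (∑ i ∈ s, w i * x i) := by
  have hgm := Real.geom_mean_le_arith_mean_weighted s w x hw hw1 (fun i hi => (hx i hi).le)
  have hprod : 0 < ∏ i ∈ s, x i ^ w i :=
    Finset.prod_pos fun i hi => Real.rpow_pos_of_pos (hx i hi) _
  have hlog := Real.log_le_log hprod hgm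
  refine le_trans (le_of_eq ?_) hlog
  rw [Real.log_prod (fun i hi => (Real.rpow_pos_of_pos (hx i hi) _).ne')]
  exact Finset.sum_congr rfl fun i hi => by rw [Real.log_rpow (hx i hi)]

/-- At matched correctness, reverse KL: KL(pb‖π_DS) ≤ KL(pb‖π_ent). -/
theorem stmt8 {T : Type*} [Fintype T] [DecidableEq T] (pb : T → ℝ)
    (hpos : ∀ τ, 0 < pb τ) (hsum : ∑ τ, pb τ = 1)
    (C : Finset T) (hC : C.Nonempty) (hCc : Cᶜ.Nonempty)
    (r : T → ℝ) (hr : ∀ τ, r τ = if τ ∈ C then 1 else 0)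
    (γ : ℝ) (hγ : 0 ≤ γ) (βe βd : ℝ) (hβe : 0 < βe) (hβd : 0 < βd)
    (pe pd : T → ℝ)
    (hpe : ∀ τ, pe τ = pb τ ^ (1 - γ) * Real.exp (r τ / βe) /
        (∑ τ', pb τ' ^ (1 - γ) * Real.exp (r τ' / βe)))
    (hpd : ∀ τ, pd τ =
        pb τ ^ (1 - γ * (if τ ∈ C then (1 : ℝ) else 0)) * Real.exp (r τ / βd) /
        (∑ τ', pb τ' ^ (1 - γ * (if τ' ∈ C then (1 : ℝ) else 0)) *
          Real.exp (r τ' / βd)))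
    (Cstar : ℝ) (h0 : 0 < Cstar) (h1 : Cstar < 1)
    (hce : ∑ τ ∈ C, pe τ = Cstar) (hcd : ∑ τ ∈ C, pd τ = Cstar) :
    ∑ τ, pb τ * Real.log (pb τ / pd τ) ≤ ∑ τ, pb τ * Real.log (pb τ / pe τ) := by
  classical
  set B : ℝ := ∑ τ ∈ C, pb τ with hBdef
  set B' : ℝ := ∑ τ ∈ Cᶜ, pb τ with hB'def
  have hB0 : 0 < B := Finset.sum_pos (fun τ _ => hpos τ) hC
  have hB'0 : 0 < B' := Finset.sum_pos (fun τ _ => hpos τ) hCc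
  have hBB' : B + B' = 1 := by
    rw [hBdef, hB'def, Finset.sum_add_sum_compl]; exact hsum
  set S : ℝ := ∑ τ ∈ C, pb τ ^ (1 - γ) with hSdef
  set S' : ℝ := ∑ τ ∈ Cᶜ, pb τ ^ (1 - γ) with hS'def
  have hS0 : 0 < S := Finset.sum_pos (fun τ _ => Real.rpow_pos_of_pos (hpos τ) _) hC
  have hS'0 : 0 < S' := Finset.sum_pos (fun τ _ => Real.rpow_pos_of_pos (hpos τ) _) hCc
  set Ee : ℝ := Real.exp (1 / βe) with hEedef
  set Ed : ℝ := Real.exp (1 / βd) with hEddef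
  have hEe0 : 0 < Ee := Real.exp_pos _
  have hEd0 : 0 < Ed := Real.exp_pos _
  -- denominators
  have hDe : (∑ τ', pb τ' ^ (1 - γ) * Real.exp (r τ' / βe)) = S * Ee + S' := by
    rw [← Finset.sum_add_sum_compl C]
    congr 1
    · rw [hSdef, Finset.sum_mul]
      exact Finset.sum_congr rfl fun τ hτ => by rw [hr τ, if_pos hτ]
    · rw [hS'def]
      refine Finset.sum_congr rfl fun τ hτ => ?_
      rw [hr τ, if_neg (Finset.mem_compl.mp hτ), zero_div, Real.exp_zero, mul_one]
  have hDd : (∑ τ', pb τ' ^ (1 - γ * (if τ' ∈ C then (1:ℝ) else 0)) *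
      Real.exp (r τ' / βd)) = S * Ed + B' := by
    rw [← Finset.sum_add_sum_compl C]
    congr 1
    · rw [hSdef, Finset.sum_mul]
      refine Finset.sum_congr rfl fun τ hτ => by rw [hr τ, if_pos hτ, mul_one]
    · rw [hB'def]
      refine Finset.sum_congr rfl fun τ hτ => ?_
      have h := Finset.mem_compl.mp hτ
      rw [hr τ, if_neg h, mul_zero, sub_zero, Real.rpow_one, zero_div, Real.exp_zero,
        mul_one]
  set Ze : ℝ := S * Ee + S' with hZedef
  set Zd : ℝ := S * Ed + B' with hZddef
  have hZe0 : 0 < Ze := by positivity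
  have hZd0 : 0 < Zd := by positivity
  -- correctness conditions
  have hce' : S * Ee = Cstar * Ze := by
    have : ∑ τ ∈ C, pe τ = S * Ee / Ze := by
      rw [hSdef, Finset.sum_mul, Finset.sum_div]
      exact Finset.sum_congr rfl fun τ hτ => by rw [hpe τ, hDe, hr τ, if_pos hτ]
    rw [this, div_eq_iff hZe0.ne'] at hce
    exact hce
  have hcd' : S * Ed = Cstar * Zd := by
    have : ∑ τ ∈ C, pd τ = S * Ed / Zd := by
      rw [hSdef, Finset.sum_mul, Finset.sum_div]
      refine Finset.sum_congr rfl fun τ hτ => by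
        rw [hpd τ, hDd, hr τ, if_pos hτ, mul_one]
    rw [this, div_eq_iff hZd0.ne'] at hcd
    exact hcd
  have hS'eq : S' = (1 - Cstar) * Ze := by rw [hZedef] at hce' ⊢; linarith
  have hB'eq : B' = (1 - Cstar) * Zd := by rw [hZddef] at hcd' ⊢; linarith
  -- log identities
  have h1C : (0:ℝ) < 1 - Cstar := by linarith
  have hbe : 1 / βe = Real.log Cstar + Real.log Ze - Real.log S := by
    have := congrArg Real.log hce'
    rw [Real.log_mul hS0.ne' hEe0.ne', Real.log_mul h0.ne' hZe0.ne', hEedef,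
      Real.log_exp] at this
    linarith
  have hbd : 1 / βd = Real.log Cstar + Real.log Zd - Real.log S := by
    have := congrArg Real.log hcd'
    rw [Real.log_mul hS0.ne' hEd0.ne', Real.log_mul h0.ne' hZd0.ne', hEddef,
      Real.log_exp] at this
    linarith
  have hlogZe : Real.log Ze = Real.log S' - Real.log (1 - Cstar) := by
    have := congrArg Real.log hS'eq
    rw [Real.log_mul h1C.ne' hZe0.ne'] at this
    linarith
  have hlogZd : Real.log Zd = Real.log B' - Real.log (1 - Cstar) := by
    have := congrArg Real.log hB'eq
    rw [Real.log_mul h1C.ne' hZd0.ne'] at this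
    linarith
  -- pointwise log formulas
  have hlogpe : ∀ τ, Real.log (pb τ / pe τ) =
      γ * Real.log (pb τ) - r τ / βe + Real.log Ze := by
    intro τ
    have hnum : 0 < pb τ ^ (1 - γ) * Real.exp (r τ / βe) :=
      mul_pos (Real.rpow_pos_of_pos (hpos τ) _) (Real.exp_pos _)
    rw [hpe τ, hDe, Real.log_div (hpos τ).ne' (div_pos hnum hZe0).ne',
      Real.log_div hnum.ne' hZe0.ne',
      Real.log_mul (Real.rpow_pos_of_pos (hpos τ) _).ne' (Real.exp_pos _).ne',
      Real.log_rpow (hpos τ), Real.log_exp]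
    ring
  have hlogpd : ∀ τ, Real.log (pb τ / pd τ) =
      γ * (if τ ∈ C then (1:ℝ) else 0) * Real.log (pb τ) - r τ / βd + Real.log Zd := by
    intro τ
    have hnum : 0 < pb τ ^ (1 - γ * (if τ ∈ C then (1:ℝ) else 0)) * Real.exp (r τ / βd) :=
      mul_pos (Real.rpow_pos_of_pos (hpos τ) _) (Real.exp_pos _)
    rw [hpd τ, hDd, Real.log_div (hpos τ).ne' (div_pos hnum hZd0).ne',
      Real.log_div hnum.ne' hZd0.ne',
      Real.log_mul (Real.rpow_pos_of_pos (hpos τ) _).ne' (Real.exp_pos _).ne',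
      Real.log_rpow (hpos τ), Real.log_exp]
    ring
  -- helper sums
  set L : ℝ := ∑ τ, pb τ * Real.log (pb τ) with hLdef
  set LC : ℝ := ∑ τ ∈ C, pb τ * Real.log (pb τ) with hLCdef
  set LCc : ℝ := ∑ τ ∈ Cᶜ, pb τ * Real.log (pb τ) with hLCcdef
  have hLsplit : L = LC + LCc := by
    rw [hLdef, hLCdef, hLCcdef, Finset.sum_add_sum_compl]
  have hsum_r : ∑ τ, pb τ * r τ = B := by
    rw [hBdef]
    simp_rw [hr, mul_ite, mul_one, mul_zero]
    simp [Finset.sum_ite_mem]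
  have hsum_ind : ∑ τ, pb τ * ((if τ ∈ C then (1:ℝ) else 0) * Real.log (pb τ)) = LC := by
    rw [hLCdef]
    simp_rw [ite_mul, one_mul, zero_mul, mul_ite, mul_zero]
    simp [Finset.sum_ite_mem]
  -- KL expressions
  have hKLe : ∑ τ, pb τ * Real.log (pb τ / pe τ) = γ * L - B / βe + Real.log Ze := by
    have : ∑ τ, pb τ * Real.log (pb τ / pe τ) =
        ∑ τ, (γ * (pb τ * Real.log (pb τ)) - (pb τ * r τ) / βe + pb τ * Real.log Ze) :=
      Finset.sum_congr rfl fun τ _ => by rw [hlogpe τ]; ring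
    rw [this, Finset.sum_add_distrib, Finset.sum_sub_distrib, ← Finset.mul_sum,
      ← Finset.sum_div, ← Finset.sum_mul, hsum_r, hsum, ← hLdef]
    ring
  have hKLd : ∑ τ, pb τ * Real.log (pb τ / pd τ) = γ * LC - B / βd + Real.log Zd := by
    have : ∑ τ, pb τ * Real.log (pb τ / pd τ) =
        ∑ τ, (γ * (pb τ * ((if τ ∈ C then (1:ℝ) else 0) * Real.log (pb τ)))
          - (pb τ * r τ) / βd + pb τ * Real.log Zd) :=
      Finset.sum_congr rfl fun τ _ => by rw [hlogpd τ]; ring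
    rw [this, Finset.sum_add_distrib, Finset.sum_sub_distrib, ← Finset.mul_sum,
      ← Finset.sum_div, ← Finset.sum_mul, hsum_r, hsum, hsum_ind]
    ring
  -- Jensen step
  have hjensen : -(γ * LCc) ≤ B' * Real.log S' - B' * Real.log B' := by
    have hj : ∑ τ ∈ Cᶜ, pb τ / B' * Real.log (pb τ ^ (-γ)) ≤
        Real.log (∑ τ ∈ Cᶜ, pb τ / B' * pb τ ^ (-γ)) :=
      jensen_log Cᶜ (fun τ => pb τ / B') (fun τ => pb τ ^ (-γ))
        (fun τ _ => (div_pos (hpos τ) hB'0).le)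
        (by rw [← Finset.sum_div, ← hB'def, div_self hB'0.ne'])
        (fun τ _ => Real.rpow_pos_of_pos (hpos τ) _)
    have hx : ∑ τ ∈ Cᶜ, pb τ / B' * pb τ ^ (-γ) = S' / B' := by
      rw [hS'def, Finset.sum_div]
      refine Finset.sum_congr rfl fun τ _ => ?_
      rw [div_mul_eq_mul_div, show (1:ℝ) - γ = 1 + -γ by ring, Real.rpow_add (hpos τ),
        Real.rpow_one]
    have hlx : ∑ τ ∈ Cᶜ, pb τ / B' * Real.log (pb τ ^ (-γ)) = -(γ * LCc) / B' := by
      have hpt : ∀ τ ∈ Cᶜ, pb τ / B' * Real.log (pb τ ^ (-γ)) =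
          -γ * (pb τ * Real.log (pb τ)) / B' := fun τ _ => by
        rw [Real.log_rpow (hpos τ)]; ring
      rw [Finset.sum_congr rfl hpt, ← Finset.sum_div, ← Finset.mul_sum, ← hLCcdef]
      ring
    rw [hx, hlx, Real.log_div hS'0.ne' hB'0.ne', div_le_iff₀ hB'0] at hj
    calc -(γ * LCc) ≤ (Real.log S' - Real.log B') * B' := hj
      _ = B' * Real.log S' - B' * Real.log B' := by ring
  -- finish
  rw [hKLe, hKLd, hLsplit]
  have e1 : B / βd = B * (Real.log Cstar + Real.log Zd - Real.log S) := by
    rw [div_eq_mul_one_div, hbd]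
  have e2 : B / βe = B * (Real.log Cstar + Real.log Ze - Real.log S) := by
    rw [div_eq_mul_one_div, hbe]
  rw [e1, e2, hlogZd, hlogZe]
  have hB : B = 1 - B' := by linarith
  rw [hB]
  ring_nf
  ring_nf at hjensen
  linarith [hjensen]
end

section
/- Under the same setting (finite T, full-support π_base, C and its complement nonempty, binary reward r = 1_C, shared exponent γ̃ ≥ 0, and inverse temperatures chosen so that π_ent and π_DS achieve the same correctness C* ∈ (0,1)), the forward KL divergence satisfies KL(π_DS‖π_base) ≤ KL(π_ent‖π_base). -/
open Real Finset

lemma log_sum_aux {ι : Type*} (s : Finset ι) (p q : ι → ℝ)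
    (hp : ∀ i ∈ s, 0 < p i) (hq : ∀ i ∈ s, 0 < q i) :
    (∑ i ∈ s, q i) * Real.log ((∑ i ∈ s, q i) / (∑ i ∈ s, p i)) ≤
      ∑ i ∈ s, q i * Real.log (q i / p i) := by
  rcases s.eq_empty_or_nonempty with rfl | hs
  · simp
  have hP : 0 < ∑ i ∈ s, p i := Finset.sum_pos hp hs
  set P := ∑ i ∈ s, p i with hPdef
  have key := Real.convexOn_mul_log.map_sum_le (t := s) (w := fun i => p i / P)
      (p := fun i => q i / p i)
      (fun i hi => by have := hp i hi; positivity)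
      (by rw [← Finset.sum_div]; field_simp; exact hPdef.symm)
      (fun i hi => Set.mem_Ici.mpr (le_of_lt (by have := hp i hi; have := hq i hi; positivity)))
  simp only [smul_eq_mul] at key
  have hw : ∀ i ∈ s, p i / P * (q i / p i) = q i / P := by
    intro i hi; have h1 := (hp i hi).ne'; have h2 := hP.ne'; field_simp
  rw [Finset.sum_congr rfl hw, ← Finset.sum_div] at key
  set Q := ∑ i ∈ s, q i with hQdef
  have key2 : Q / P * Real.log (Q / P) ≤ (∑ i ∈ s, q i * Real.log (q i / p i)) / P := by
    refine key.trans (le_of_eq ?_)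
    rw [Finset.sum_div]
    refine Finset.sum_congr rfl fun i hi => ?_
    have hpi := (hp i hi).ne'
    field_simp
  have := mul_le_mul_of_nonneg_left key2 hP.le
  calc Q * Real.log (Q / P) = P * (Q / P * Real.log (Q / P)) := by field_simp
    _ ≤ P * ((∑ i ∈ s, q i * Real.log (q i / p i)) / P) := this
    _ = ∑ i ∈ s, q i * Real.log (q i / p i) := by field_simp

/-- At matched correctness, forward KL: KL(π_DS‖pb) ≤ KL(π_ent‖pb). -/
theorem stmt9 {T : Type*} [Fintype T] [DecidableEq T] (pb : T → ℝ)
    (hpos : ∀ τ, 0 < pb τ) (hsum : ∑ τ, pb τ = 1)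
    (C : Finset T) (hC : C.Nonempty) (hCc : Cᶜ.Nonempty)
    (r : T → ℝ) (hr : ∀ τ, r τ = if τ ∈ C then 1 else 0)
    (γ : ℝ) (hγ : 0 ≤ γ) (βe βd : ℝ) (hβe : 0 < βe) (hβd : 0 < βd)
    (pe pd : T → ℝ)
    (hpe : ∀ τ, pe τ = pb τ ^ (1 - γ) * Real.exp (r τ / βe) /
        (∑ τ', pb τ' ^ (1 - γ) * Real.exp (r τ' / βe)))
    (hpd : ∀ τ, pd τ =
        pb τ ^ (1 - γ * (if τ ∈ C then (1 : ℝ) else 0)) * Real.exp (r τ / βd) /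
        (∑ τ', pb τ' ^ (1 - γ * (if τ' ∈ C then (1 : ℝ) else 0)) *
          Real.exp (r τ' / βd)))
    (Cstar : ℝ) (h0 : 0 < Cstar) (h1 : Cstar < 1)
    (hce : ∑ τ ∈ C, pe τ = Cstar) (hcd : ∑ τ ∈ C, pd τ = Cstar) :
    ∑ τ, pd τ * Real.log (pd τ / pb τ) ≤ ∑ τ, pe τ * Real.log (pe τ / pb τ) := by
  set Ze := ∑ τ', pb τ' ^ (1 - γ) * Real.exp (r τ' / βe) with hZe
  set Zd := ∑ τ', pb τ' ^ (1 - γ * (if τ' ∈ C then (1 : ℝ) else 0)) *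
      Real.exp (r τ' / βd) with hZd
  have _ : Nonempty T := ⟨hC.choose⟩
  have hZepos : 0 < Ze :=
    Finset.sum_pos (fun τ _ => by have := hpos τ; positivity) Finset.univ_nonempty
  have hZdpos : 0 < Zd :=
    Finset.sum_pos (fun τ _ => by have := hpos τ; positivity) Finset.univ_nonempty
  have hpepos : ∀ τ, 0 < pe τ := fun τ => by
    rw [hpe τ]; have := hpos τ; positivity
  have hpdpos : ∀ τ, 0 < pd τ := fun τ => by
    rw [hpd τ]; have := hpos τ; positivity
  have hpesum : ∑ τ, pe τ = 1 := by
    simp only [hpe, ← Finset.sum_div, ← hZe]; field_simp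
  have hpdsum : ∑ τ, pd τ = 1 := by
    simp only [hpd, ← Finset.sum_div, ← hZd]; field_simp
  set Sγ := ∑ τ ∈ C, pb τ ^ (1 - γ) with hSγ
  have hSγpos : 0 < Sγ := Finset.sum_pos (fun τ _ => by have := hpos τ; positivity) hC
  set S := ∑ τ ∈ Cᶜ, pb τ with hS
  have hSpos : 0 < S := Finset.sum_pos (fun τ _ => hpos τ) hCc
  -- pe and pd agree on C
  have hpeC : ∀ τ ∈ C, pe τ = Cstar * pb τ ^ (1 - γ) / Sγ := by
    have hkey : Real.exp (1 / βe) / Ze * Sγ = Cstar := by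
      rw [← hce]
      rw [Finset.mul_sum]
      refine Finset.sum_congr rfl fun τ hτ => ?_
      rw [hpe τ, hr τ, if_pos hτ]; ring
    intro τ hτ
    rw [hpe τ, hr τ, if_pos hτ, ← hkey]
    field_simp
  have hpdC : ∀ τ ∈ C, pd τ = Cstar * pb τ ^ (1 - γ) / Sγ := by
    have hkey : Real.exp (1 / βd) / Zd * Sγ = Cstar := by
      rw [← hcd, Finset.mul_sum]
      refine Finset.sum_congr rfl fun τ hτ => ?_
      rw [hpd τ, hr τ, if_pos hτ, mul_one]; ring
    intro τ hτ
    rw [hpd τ, hr τ, if_pos hτ, mul_one, ← hkey]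
    field_simp
  -- complement masses
  have hceC : ∑ τ ∈ Cᶜ, pe τ = 1 - Cstar := by
    have := Finset.sum_add_sum_compl C pe
    rw [hce, hpesum] at this; linarith
  have hcdC : ∑ τ ∈ Cᶜ, pd τ = 1 - Cstar := by
    have := Finset.sum_add_sum_compl C pd
    rw [hcd, hpdsum] at this; linarith
  -- pd on the complement
  have hpdCc : ∀ τ ∈ Cᶜ, pd τ = pb τ * ((1 - Cstar) / S) := by
    have hkey : (1 : ℝ) / Zd * S = 1 - Cstar := by
      rw [← hcdC, Finset.mul_sum]
      refine Finset.sum_congr rfl fun τ hτ => ?_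
      have hτ' : τ ∉ C := Finset.mem_compl.mp hτ
      rw [hpd τ, hr τ, if_neg hτ', mul_zero, sub_zero, zero_div,
        Real.exp_zero, mul_one, Real.rpow_one]
      ring
    intro τ hτ
    have hτ' : τ ∉ C := Finset.mem_compl.mp hτ
    rw [hpd τ, hr τ, if_neg hτ', mul_zero, sub_zero, zero_div,
      Real.exp_zero, mul_one, Real.rpow_one, ← hkey]
    field_simp
  -- split both sums over C and Cᶜ
  rw [← Finset.sum_add_sum_compl C fun τ => pd τ * Real.log (pd τ / pb τ),
    ← Finset.sum_add_sum_compl C fun τ => pe τ * Real.log (pe τ / pb τ)]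
  have hCeq : ∑ τ ∈ C, pd τ * Real.log (pd τ / pb τ)
      = ∑ τ ∈ C, pe τ * Real.log (pe τ / pb τ) := by
    refine Finset.sum_congr rfl fun τ hτ => ?_
    rw [hpeC τ hτ, hpdC τ hτ]
  rw [hCeq]
  refine add_le_add le_rfl ?_
  -- compute LHS on the complement
  have hLHS : ∑ τ ∈ Cᶜ, pd τ * Real.log (pd τ / pb τ)
      = (1 - Cstar) * Real.log ((1 - Cstar) / S) := by
    have : ∀ τ ∈ Cᶜ, pd τ * Real.log (pd τ / pb τ)
        = pb τ * ((1 - Cstar) / S * Real.log ((1 - Cstar) / S)) := by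
      intro τ hτ
      rw [hpdCc τ hτ]
      have hb := (hpos τ).ne'
      have hq : pb τ * ((1 - Cstar) / S) / pb τ = (1 - Cstar) / S := by
        field_simp
      rw [hq]
      ring
    rw [Finset.sum_congr rfl this, ← Finset.sum_mul, ← hS]
    have hSne := hSpos.ne'
    field_simp
  rw [hLHS]
  have := log_sum_aux Cᶜ pb pe (fun τ _ => hpos τ) (fun τ _ => hpepos τ)
  rw [hceC, ← hS] at this
  exact this
end

section
/- Under the same setting (finite T, full-support π_base, C and its complement nonempty, binary reward r = 1_C, shared exponent γ̃ ≥ 0, inverse temperatures matched so that both policies achieve the same correctness C* ∈ (0,1)), the reverse chi-squared divergence satisfies χ²(π_base‖π_DS) ≤ χ²(π_base‖π_ent), where χ²(p‖q) = Σ_τ q(τ)·(p(τ)/q(τ) − 1)² = Σ_τ p(τ)²/q(τ) − 1. -/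
/-- At matched correctness, reverse chi-squared: χ²(pb‖π_DS) ≤ χ²(pb‖π_ent). -/
theorem stmt10 {T : Type*} [Fintype T] [DecidableEq T] (pb : T → ℝ)
    (hpos : ∀ τ, 0 < pb τ) (hsum : ∑ τ, pb τ = 1)
    (C : Finset T) (hC : C.Nonempty) (hCc : Cᶜ.Nonempty)
    (r : T → ℝ) (hr : ∀ τ, r τ = if τ ∈ C then 1 else 0)
    (γ : ℝ) (hγ : 0 ≤ γ) (βe βd : ℝ) (hβe : 0 < βe) (hβd : 0 < βd)
    (pe pd : T → ℝ)
    (hpe : ∀ τ, pe τ = pb τ ^ (1 - γ) * Real.exp (r τ / βe) /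
        (∑ τ', pb τ' ^ (1 - γ) * Real.exp (r τ' / βe)))
    (hpd : ∀ τ, pd τ =
        pb τ ^ (1 - γ * (if τ ∈ C then (1 : ℝ) else 0)) * Real.exp (r τ / βd) /
        (∑ τ', pb τ' ^ (1 - γ * (if τ' ∈ C then (1 : ℝ) else 0)) *
          Real.exp (r τ' / βd)))
    (Cstar : ℝ) (h0 : 0 < Cstar) (h1 : Cstar < 1)
    (hce : ∑ τ ∈ C, pe τ = Cstar) (hcd : ∑ τ ∈ C, pd τ = Cstar) :
    (∑ τ, pb τ ^ 2 / pd τ) - 1 ≤ (∑ τ, pb τ ^ 2 / pe τ) - 1 := by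
  have hne : Nonempty T := ⟨hC.choose⟩
  set S : ℝ := ∑ τ ∈ C, pb τ ^ (1 - γ) with hSdef
  set S' : ℝ := ∑ τ ∈ Cᶜ, pb τ ^ (1 - γ) with hS'def
  set B : ℝ := ∑ τ ∈ Cᶜ, pb τ with hBdef
  have hS : 0 < S := Finset.sum_pos (fun τ _ => Real.rpow_pos_of_pos (hpos τ) _) hC
  have hS' : 0 < S' := Finset.sum_pos (fun τ _ => Real.rpow_pos_of_pos (hpos τ) _) hCc
  have hB : 0 < B := Finset.sum_pos (fun τ _ => hpos τ) hCc
  set Ze : ℝ := ∑ τ', pb τ' ^ (1 - γ) * Real.exp (r τ' / βe) with hZedef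
  set Zd : ℝ := ∑ τ', pb τ' ^ (1 - γ * (if τ' ∈ C then (1 : ℝ) else 0)) *
      Real.exp (r τ' / βd) with hZddef
  have hZe : 0 < Ze := Finset.sum_pos
    (fun τ _ => mul_pos (Real.rpow_pos_of_pos (hpos τ) _) (Real.exp_pos _))
    Finset.univ_nonempty
  have hZd : 0 < Zd := Finset.sum_pos
    (fun τ _ => mul_pos (Real.rpow_pos_of_pos (hpos τ) _) (Real.exp_pos _))
    Finset.univ_nonempty
  have h1C : (0:ℝ) < 1 - Cstar := by linarith
  -- total masses are 1
  have hsume : ∑ τ, pe τ = 1 := by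
    simp only [hpe]
    rw [← Finset.sum_div, ← hZedef, div_self hZe.ne']
  have hsumd : ∑ τ, pd τ = 1 := by
    simp only [hpd]
    rw [← Finset.sum_div, ← hZddef, div_self hZd.ne']
  -- complement masses
  have hcec : ∑ τ ∈ Cᶜ, pe τ = 1 - Cstar := by
    have := Finset.sum_add_sum_compl C pe
    rw [hce, hsume] at this; linarith
  have hcdc : ∑ τ ∈ Cᶜ, pd τ = 1 - Cstar := by
    have := Finset.sum_add_sum_compl C pd
    rw [hcd, hsumd] at this; linarith
  -- pointwise formulas on C
  have hpeC : ∀ τ ∈ C, pe τ = pb τ ^ (1 - γ) * (Cstar / S) := by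
    have hk : S * (Real.exp (1 / βe) / Ze) = Cstar := by
      rw [← hce, hSdef, Finset.sum_mul]
      refine Finset.sum_congr rfl fun τ hτ => ?_
      rw [hpe τ, hr τ, if_pos hτ, mul_div_assoc]
    intro τ hτ
    rw [hpe τ, hr τ, if_pos hτ, mul_div_assoc]
    congr 1
    field_simp at hk ⊢
    linarith [hk]
  have hpdC : ∀ τ ∈ C, pd τ = pb τ ^ (1 - γ) * (Cstar / S) := by
    have hk : S * (Real.exp (1 / βd) / Zd) = Cstar := by
      rw [← hcd, hSdef, Finset.sum_mul]
      refine Finset.sum_congr rfl fun τ hτ => ?_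
      rw [hpd τ, hr τ, if_pos hτ, mul_one, mul_div_assoc]
    intro τ hτ
    rw [hpd τ, hr τ, if_pos hτ, mul_one, mul_div_assoc]
    congr 1
    field_simp at hk ⊢
    linarith [hk]
  -- pointwise formulas on Cᶜ
  have hpeCc : ∀ τ ∈ Cᶜ, pe τ = pb τ ^ (1 - γ) * ((1 - Cstar) / S') := by
    have hτC : ∀ τ ∈ Cᶜ, τ ∉ C := fun τ hτ => Finset.mem_compl.mp hτ
    have hk : S' * (Real.exp (0 / βe) / Ze) = 1 - Cstar := by
      rw [← hcec, hS'def, Finset.sum_mul]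
      refine Finset.sum_congr rfl fun τ hτ => ?_
      rw [hpe τ, hr τ, if_neg (hτC τ hτ), mul_div_assoc]
    intro τ hτ
    rw [hpe τ, hr τ, if_neg (hτC τ hτ), mul_div_assoc]
    congr 1
    field_simp at hk ⊢
    linarith [hk]
  have hpdCc : ∀ τ ∈ Cᶜ, pd τ = pb τ * ((1 - Cstar) / B) := by
    have hτC : ∀ τ ∈ Cᶜ, τ ∉ C := fun τ hτ => Finset.mem_compl.mp hτ
    have hk : B * (Real.exp (0 / βd) / Zd) = 1 - Cstar := by
      rw [← hcdc, hBdef, Finset.sum_mul]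
      refine Finset.sum_congr rfl fun τ hτ => ?_
      rw [hpd τ, hr τ, if_neg (hτC τ hτ), mul_zero, sub_zero,
        Real.rpow_one, mul_div_assoc]
    intro τ hτ
    rw [hpd τ, hr τ, if_neg (hτC τ hτ), mul_zero, sub_zero,
      Real.rpow_one, mul_div_assoc]
    congr 1
    field_simp at hk ⊢
    linarith [hk]
  -- split into C and Cᶜ parts
  have hsplitd : (∑ τ, pb τ ^ 2 / pd τ) =
      (∑ τ ∈ C, pb τ ^ 2 / pd τ) + ∑ τ ∈ Cᶜ, pb τ ^ 2 / pd τ :=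
    (Finset.sum_add_sum_compl C _).symm
  have hsplite : (∑ τ, pb τ ^ 2 / pe τ) =
      (∑ τ ∈ C, pb τ ^ 2 / pe τ) + ∑ τ ∈ Cᶜ, pb τ ^ 2 / pe τ :=
    (Finset.sum_add_sum_compl C _).symm
  have hCeq : (∑ τ ∈ C, pb τ ^ 2 / pd τ) = ∑ τ ∈ C, pb τ ^ 2 / pe τ :=
    Finset.sum_congr rfl fun τ hτ => by rw [hpdC τ hτ, hpeC τ hτ]
  have key : (∑ τ ∈ Cᶜ, pb τ ^ 2 / pd τ) ≤ ∑ τ ∈ Cᶜ, pb τ ^ 2 / pe τ := by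
    -- LHS = B * (B/(1-Cstar))
    have hL : (∑ τ ∈ Cᶜ, pb τ ^ 2 / pd τ) = B * (B / (1 - Cstar)) := by
      calc (∑ τ ∈ Cᶜ, pb τ ^ 2 / pd τ)
          = ∑ τ ∈ Cᶜ, pb τ * (B / (1 - Cstar)) := by
            refine Finset.sum_congr rfl fun τ hτ => ?_
            rw [hpdCc τ hτ]
            have h2 := (hpos τ).ne'
            have h3 := hB.ne'
            have h4 := h1C.ne'
            field_simp
        _ = B * (B / (1 - Cstar)) := by rw [← Finset.sum_mul, ← hBdef]
    -- RHS = (∑ pb^{1+γ}) * (S'/(1-Cstar))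
    have hR : (∑ τ ∈ Cᶜ, pb τ ^ 2 / pe τ) =
        (∑ τ ∈ Cᶜ, pb τ ^ (1 + γ)) * (S' / (1 - Cstar)) := by
      rw [Finset.sum_mul]
      refine Finset.sum_congr rfl fun τ hτ => ?_
      rw [hpeCc τ hτ]
      have hb := hpos τ
      have h2 : pb τ ^ 2 = pb τ ^ (1 + γ) * pb τ ^ (1 - γ) := by
        rw [← Real.rpow_add hb, ← Real.rpow_natCast (pb τ) 2]
        norm_num
      have h3 := (Real.rpow_pos_of_pos hb (1 - γ)).ne'
      have h4 := hS'.ne'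
      have h5 := h1C.ne'
      rw [h2]
      field_simp
    rw [hL, hR]
    -- Cauchy-Schwarz: B^2 ≤ (∑ pb^{1+γ}) * S'
    have cs := Finset.sum_mul_sq_le_sq_mul_sq Cᶜ
      (fun τ => pb τ ^ ((1 + γ) / 2)) (fun τ => pb τ ^ ((1 - γ) / 2))
    have hfg : (∑ τ ∈ Cᶜ, pb τ ^ ((1 + γ) / 2) * pb τ ^ ((1 - γ) / 2)) = B := by
      rw [hBdef]
      refine Finset.sum_congr rfl fun τ _ => ?_
      rw [← Real.rpow_add (hpos τ)]
      have he : (1 + γ) / 2 + (1 - γ) / 2 = 1 := by ring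
      rw [he, Real.rpow_one]
    have hf2 : (∑ τ ∈ Cᶜ, (pb τ ^ ((1 + γ) / 2)) ^ 2) = ∑ τ ∈ Cᶜ, pb τ ^ (1 + γ) := by
      refine Finset.sum_congr rfl fun τ _ => ?_
      rw [← Real.rpow_natCast (pb τ ^ ((1 + γ) / 2)) 2, ← Real.rpow_mul (hpos τ).le]
      norm_num
    have hg2 : (∑ τ ∈ Cᶜ, (pb τ ^ ((1 - γ) / 2)) ^ 2) = S' := by
      rw [hS'def]
      refine Finset.sum_congr rfl fun τ _ => ?_
      rw [← Real.rpow_natCast (pb τ ^ ((1 - γ) / 2)) 2, ← Real.rpow_mul (hpos τ).le]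
      norm_num
    rw [hfg, hf2, hg2] at cs
    have hcs : B * B ≤ (∑ τ ∈ Cᶜ, pb τ ^ (1 + γ)) * S' := by
      calc B * B = B ^ 2 := (sq B).symm
      _ ≤ _ := cs
    calc B * (B / (1 - Cstar)) = B * B / (1 - Cstar) := by rw [mul_div_assoc]
      _ ≤ (∑ τ ∈ Cᶜ, pb τ ^ (1 + γ)) * S' / (1 - Cstar) := by
          rw [div_le_div_iff₀ h1C h1C]
          nlinarith [hcs]
      _ = (∑ τ ∈ Cᶜ, pb τ ^ (1 + γ)) * (S' / (1 - Cstar)) := by rw [mul_div_assoc]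
  rw [hsplitd, hsplite, hCeq]
  linarith
end

section
/- Under the same setting (finite T, full-support π_base, C and complement nonempty, binary reward r = 1_C, shared exponent γ̃ ≥ 0, inverse temperatures matched to equal correctness C* ∈ (0,1)), the forward chi-squared divergence satisfies χ²(π_DS‖π_base) ≤ χ²(π_ent‖π_base). -/
/-- At matched correctness, forward chi-squared: χ²(π_DS‖pb) ≤ χ²(π_ent‖pb). -/
theorem stmt11 {T : Type*} [Fintype T] [DecidableEq T] (pb : T → ℝ)
    (hpos : ∀ τ, 0 < pb τ) (hsum : ∑ τ, pb τ = 1)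
    (C : Finset T) (hC : C.Nonempty) (hCc : Cᶜ.Nonempty)
    (r : T → ℝ) (hr : ∀ τ, r τ = if τ ∈ C then 1 else 0)
    (γ : ℝ) (hγ : 0 ≤ γ) (βe βd : ℝ) (hβe : 0 < βe) (hβd : 0 < βd)
    (pe pd : T → ℝ)
    (hpe : ∀ τ, pe τ = pb τ ^ (1 - γ) * Real.exp (r τ / βe) /
        (∑ τ', pb τ' ^ (1 - γ) * Real.exp (r τ' / βe)))
    (hpd : ∀ τ, pd τ =
        pb τ ^ (1 - γ * (if τ ∈ C then (1 : ℝ) else 0)) * Real.exp (r τ / βd) /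
        (∑ τ', pb τ' ^ (1 - γ * (if τ' ∈ C then (1 : ℝ) else 0)) *
          Real.exp (r τ' / βd)))
    (Cstar : ℝ) (h0 : 0 < Cstar) (h1 : Cstar < 1)
    (hce : ∑ τ ∈ C, pe τ = Cstar) (hcd : ∑ τ ∈ C, pd τ = Cstar) :
    (∑ τ, pd τ ^ 2 / pb τ) - 1 ≤ (∑ τ, pe τ ^ 2 / pb τ) - 1 := by
  haveI : Nonempty T := ⟨hC.choose⟩
  set Ze := ∑ τ', pb τ' ^ (1 - γ) * Real.exp (r τ' / βe) with hZe_def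
  set Zd := ∑ τ', pb τ' ^ (1 - γ * (if τ' ∈ C then (1 : ℝ) else 0)) *
      Real.exp (r τ' / βd) with hZd_def
  have hZe : 0 < Ze := Finset.sum_pos
    (fun τ _ => mul_pos (Real.rpow_pos_of_pos (hpos τ) _) (Real.exp_pos _))
    Finset.univ_nonempty
  have hZd : 0 < Zd := Finset.sum_pos
    (fun τ _ => mul_pos (Real.rpow_pos_of_pos (hpos τ) _) (Real.exp_pos _))
    Finset.univ_nonempty
  have hsum_pe : ∑ τ, pe τ = 1 := by
    rw [Finset.sum_congr rfl (fun τ _ => hpe τ), ← Finset.sum_div, ← hZe_def,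
      div_self hZe.ne']
  have hsum_pd : ∑ τ, pd τ = 1 := by
    rw [Finset.sum_congr rfl (fun τ _ => hpd τ), ← Finset.sum_div, ← hZd_def,
      div_self hZd.ne']
  -- pe and pd coincide on C
  set SC := ∑ τ ∈ C, pb τ ^ (1 - γ) with hSC_def
  have hSC : 0 < SC := Finset.sum_pos
    (fun τ _ => Real.rpow_pos_of_pos (hpos τ) _) hC
  have hpeC : ∀ τ ∈ C, pe τ = pb τ ^ (1 - γ) * (Real.exp (1 / βe) / Ze) := by
    intro τ hτ
    rw [hpe τ, hr τ, if_pos hτ, mul_div_assoc]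
  have hpdC : ∀ τ ∈ C, pd τ = pb τ ^ (1 - γ) * (Real.exp (1 / βd) / Zd) := by
    intro τ hτ
    rw [hpd τ, hr τ, if_pos hτ, mul_one, mul_div_assoc]
  have hae : Real.exp (1 / βe) / Ze = Cstar / SC := by
    have : SC * (Real.exp (1 / βe) / Ze) = Cstar := by
      rw [← hce, hSC_def, Finset.sum_mul]
      exact Finset.sum_congr rfl fun τ hτ => (hpeC τ hτ).symm
    field_simp at this ⊢
    linarith [this]
  have had : Real.exp (1 / βd) / Zd = Cstar / SC := by
    have : SC * (Real.exp (1 / βd) / Zd) = Cstar := by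
      rw [← hcd, hSC_def, Finset.sum_mul]
      exact Finset.sum_congr rfl fun τ hτ => (hpdC τ hτ).symm
    field_simp at this ⊢
    linarith [this]
  have hC_eq : ∀ τ ∈ C, pe τ = pd τ := by
    intro τ hτ
    rw [hpeC τ hτ, hpdC τ hτ, hae, had]
  -- pd is proportional to pb off C
  have hpdCc : ∀ τ ∈ Cᶜ, pd τ = pb τ / Zd := by
    intro τ hτ
    have hτ' : τ ∉ C := Finset.mem_compl.mp hτ
    rw [hpd τ, hr τ, if_neg hτ', mul_zero, sub_zero, Real.rpow_one,
      zero_div, Real.exp_zero, mul_one]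
  -- tail masses match
  have hse : ∑ τ ∈ Cᶜ, pe τ = 1 - Cstar := by
    have h := Finset.sum_add_sum_compl C pe
    rw [hsum_pe, hce] at h; linarith
  have hsd : ∑ τ ∈ Cᶜ, pd τ = 1 - Cstar := by
    have h := Finset.sum_add_sum_compl C pd
    rw [hsum_pd, hcd] at h; linarith
  -- key inequality on the complement
  have key : ∑ τ ∈ Cᶜ, pd τ ^ 2 / pb τ ≤ ∑ τ ∈ Cᶜ, pe τ ^ 2 / pb τ := by
    have hdiff : ∑ τ ∈ Cᶜ, (pe τ ^ 2 / pb τ - pd τ ^ 2 / pb τ)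
        = ∑ τ ∈ Cᶜ, (pe τ - pd τ) ^ 2 / pb τ
          + (2 / Zd) * ∑ τ ∈ Cᶜ, (pe τ - pd τ) := by
      rw [Finset.mul_sum, ← Finset.sum_add_distrib]
      refine Finset.sum_congr rfl fun τ hτ => ?_
      rw [hpdCc τ hτ]
      have hb := (hpos τ).ne'
      field_simp
      ring
    have hzero : ∑ τ ∈ Cᶜ, (pe τ - pd τ) = 0 := by
      rw [Finset.sum_sub_distrib, hse, hsd, sub_self]
    have hnn : 0 ≤ ∑ τ ∈ Cᶜ, (pe τ - pd τ) ^ 2 / pb τ :=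
      Finset.sum_nonneg fun τ _ => div_nonneg (sq_nonneg _) (hpos τ).le
    have : 0 ≤ ∑ τ ∈ Cᶜ, (pe τ ^ 2 / pb τ - pd τ ^ 2 / pb τ) := by
      rw [hdiff, hzero, mul_zero, add_zero]; exact hnn
    rw [Finset.sum_sub_distrib] at this
    linarith
  have hCsame : ∑ τ ∈ C, pd τ ^ 2 / pb τ = ∑ τ ∈ C, pe τ ^ 2 / pb τ :=
    Finset.sum_congr rfl fun τ hτ => by rw [hC_eq τ hτ]
  have he := Finset.sum_add_sum_compl C (fun τ => pe τ ^ 2 / pb τ)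
  have hd := Finset.sum_add_sum_compl C (fun τ => pd τ ^ 2 / pb τ)
  linarith
end

section
/- (Entropy bonus flattens the correct-conditional distribution) Let π_base be full-support on finite T, ∅ ≠ C ⊆ T, r = 1_C, 0 ≤ γ̃ < 1, β > 0, and π_ent(τ) ∝ π_base(τ)^{1−γ̃}·exp(r(τ)/β). Then the normalized variance over correct trajectories decreases: σ(π_ent) ≤ σ(π_base), where σ(π) = [Σ_{τ∈C} π(τ)² − (Σ_{τ∈C} π(τ))²]/(Σ_{τ∈C} π(τ))², with equality iff π_base is constant on C or γ̃ = 0. -/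
open Finset

private lemma stmt15_sign (x y t : ℝ) (hx : 0 < x) (hy : 0 < y) (ht : 0 ≤ t) :
    0 ≤ (x ^ t - y ^ t) * (x - y) := by
  rcases le_total x y with h | h
  · have h1 : x ^ t ≤ y ^ t := Real.rpow_le_rpow hx.le h ht
    nlinarith
  · have h1 : y ^ t ≤ x ^ t := Real.rpow_le_rpow hy.le h ht
    nlinarith

private lemma stmt15_sign' (x y t : ℝ) (hx : 0 < x) (hy : 0 < y) (ht : 0 < t)
    (hne : x ≠ y) : 0 < (x ^ t - y ^ t) * (x - y) := by
  rcases lt_or_gt_of_ne hne with h | h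
  · have h1 : x ^ t < y ^ t := Real.rpow_lt_rpow hx.le h ht
    nlinarith
  · have h1 : y ^ t < x ^ t := Real.rpow_lt_rpow hy.le h ht
    nlinarith

private lemma stmt15_sign2 (x y s : ℝ) (hx : 0 < x) (hy : 0 < y) (hs0 : 0 ≤ s)
    (hs1 : s ≤ 1) : 0 ≤ (x ^ s - y ^ s) * (x ^ (1 - s) - y ^ (1 - s)) := by
  rcases le_total x y with h | h
  · have h1 : x ^ s ≤ y ^ s := Real.rpow_le_rpow hx.le h hs0
    have h2 : x ^ (1 - s) ≤ y ^ (1 - s) := Real.rpow_le_rpow hx.le h (by linarith)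
    nlinarith
  · have h1 : y ^ s ≤ x ^ s := Real.rpow_le_rpow hy.le h hs0
    have h2 : y ^ (1 - s) ≤ x ^ (1 - s) := Real.rpow_le_rpow hy.le h (by linarith)
    nlinarith

private lemma stmt15_split (x s : ℝ) (hx : 0 < x) : x ^ s * x ^ (1 - s) = x := by
  rw [← Real.rpow_add hx]
  norm_num

/-- pairwise inequality A: u i ^2 * x j + u j ^2 * x i ≤ (u i * x i) * u j + (u j * x j) * u i -/
private lemma stmt15_pairA (x y s : ℝ) (hx : 0 < x) (hy : 0 < y) (hs0 : 0 ≤ s)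
    (hs1 : s ≤ 1) :
    (x ^ s) ^ 2 * y + (y ^ s) ^ 2 * x ≤
      (x ^ s * x) * (y ^ s) + (y ^ s * y) * (x ^ s) := by
  have h2 := stmt15_sign2 x y s hx hy hs0 hs1
  have ha := Real.rpow_pos_of_pos hx s
  have hc := Real.rpow_pos_of_pos hy s
  have hxs := stmt15_split x s hx
  have hys := stmt15_split y s hy
  set a := x ^ s with hA
  set b := x ^ (1 - s) with hB
  set c := y ^ s with hCc
  set d := y ^ (1 - s) with hD
  rw [← hxs, ← hys]
  nlinarith [mul_nonneg (mul_nonneg ha.le hc.le) h2]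

/-- pairwise inequality B -/
private lemma stmt15_pairB (x y s : ℝ) (hx : 0 < x) (hy : 0 < y) (hs0 : 0 ≤ s)
    (hs1 : s ≤ 1) :
    (x ^ s * x) * y + (y ^ s * y) * x ≤ x ^ 2 * (y ^ s) + y ^ 2 * (x ^ s) := by
  have h2 := stmt15_sign x y (1 - s) hx hy (by linarith)
  have ha := Real.rpow_pos_of_pos hx s
  have hc := Real.rpow_pos_of_pos hy s
  have hxs := stmt15_split x s hx
  have hys := stmt15_split y s hy
  set a := x ^ s with hA
  set b := x ^ (1 - s) with hB
  set c := y ^ s with hCc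
  set d := y ^ (1 - s) with hD
  rw [← hxs, ← hys] at h2 ⊢
  nlinarith [mul_nonneg (mul_nonneg ha.le hc.le) h2]

private lemma stmt15_pairB' (x y s : ℝ) (hx : 0 < x) (hy : 0 < y) (hs0 : 0 ≤ s)
    (hs1 : s < 1) (hne : x ≠ y) :
    (x ^ s * x) * y + (y ^ s * y) * x < x ^ 2 * (y ^ s) + y ^ 2 * (x ^ s) := by
  have h2 := stmt15_sign' x y (1 - s) hx hy (by linarith) hne
  have ha := Real.rpow_pos_of_pos hx s
  have hc := Real.rpow_pos_of_pos hy s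
  have hxs := stmt15_split x s hx
  have hys := stmt15_split y s hy
  set a := x ^ s with hA
  set b := x ^ (1 - s) with hB
  set c := y ^ s with hCc
  set d := y ^ (1 - s) with hD
  rw [← hxs, ← hys] at h2 ⊢
  nlinarith [mul_pos (mul_pos ha hc) h2]

private lemma stmt15_key {T : Type*} (C : Finset T) (F G : T → ℝ) :
    (∑ i ∈ C, F i) * (∑ i ∈ C, G i) * 2 =
      ∑ i ∈ C, ∑ j ∈ C, (F i * G j + F j * G i) := by
  simp only [Finset.sum_add_distrib]
  rw [← Finset.sum_mul_sum]
  conv_rhs => rw [Finset.sum_comm]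
  rw [← Finset.sum_mul_sum]
  ring

private lemma stmt15_sum_le {T : Type*} (C : Finset T) (f g f' g' : T → ℝ)
    (h : ∀ i ∈ C, ∀ j ∈ C, f i * g j + f j * g i ≤ f' i * g' j + f' j * g' i) :
    (∑ i ∈ C, f i) * (∑ i ∈ C, g i) ≤ (∑ i ∈ C, f' i) * (∑ i ∈ C, g' i) := by
  have hle : ∑ i ∈ C, ∑ j ∈ C, (f i * g j + f j * g i) ≤
      ∑ i ∈ C, ∑ j ∈ C, (f' i * g' j + f' j * g' i) :=
    Finset.sum_le_sum fun i hi => Finset.sum_le_sum fun j hj => h i hi j hj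
  have k1 := stmt15_key C f g
  have k2 := stmt15_key C f' g'
  linarith

private lemma stmt15_sum_lt {T : Type*} (C : Finset T) (f g f' g' : T → ℝ)
    (h : ∀ i ∈ C, ∀ j ∈ C, f i * g j + f j * g i ≤ f' i * g' j + f' j * g' i)
    (i0 : T) (hi0 : i0 ∈ C) (j0 : T) (hj0 : j0 ∈ C)
    (hst : f i0 * g j0 + f j0 * g i0 < f' i0 * g' j0 + f' j0 * g' i0) :
    (∑ i ∈ C, f i) * (∑ i ∈ C, g i) < (∑ i ∈ C, f' i) * (∑ i ∈ C, g' i) := by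
  have hlt : ∑ i ∈ C, ∑ j ∈ C, (f i * g j + f j * g i) <
      ∑ i ∈ C, ∑ j ∈ C, (f' i * g' j + f' j * g' i) := by
    refine Finset.sum_lt_sum (fun i hi => Finset.sum_le_sum fun j hj => h i hi j hj)
      ⟨i0, hi0, Finset.sum_lt_sum (fun j hj => h i0 hi0 j hj) ⟨j0, hj0, hst⟩⟩
  have k1 := stmt15_key C f g
  have k2 := stmt15_key C f' g'
  linarith

/-- Entropy bonus flattens the correct-conditional distribution: the normalized
variance over correct trajectories of the entropy-modified policy is at most that
of the base policy, with equality iff `pb` is constant on `C` or `γ = 0`. -/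
theorem stmt15 {T : Type*} [Fintype T] [DecidableEq T] (pb : T → ℝ)
    (hpos : ∀ τ, 0 < pb τ) (hsum : ∑ τ, pb τ = 1)
    (C : Finset T) (hC : C.Nonempty)
    (r : T → ℝ) (hr : ∀ τ, r τ = if τ ∈ C then 1 else 0)
    (γ β : ℝ) (hγ0 : 0 ≤ γ) (hγ1 : γ < 1) (hβ : 0 < β)
    (Z : ℝ) (hZ : Z = ∑ τ, pb τ ^ (1 - γ) * Real.exp (r τ / β))
    (pe : T → ℝ)
    (hpe : ∀ τ, pe τ = pb τ ^ (1 - γ) * Real.exp (r τ / β) / Z) :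
    ((∑ τ ∈ C, pe τ ^ 2) - (∑ τ ∈ C, pe τ) ^ 2) / (∑ τ ∈ C, pe τ) ^ 2 ≤
      ((∑ τ ∈ C, pb τ ^ 2) - (∑ τ ∈ C, pb τ) ^ 2) / (∑ τ ∈ C, pb τ) ^ 2 ∧
    (((∑ τ ∈ C, pe τ ^ 2) - (∑ τ ∈ C, pe τ) ^ 2) / (∑ τ ∈ C, pe τ) ^ 2 =
      ((∑ τ ∈ C, pb τ ^ 2) - (∑ τ ∈ C, pb τ) ^ 2) / (∑ τ ∈ C, pb τ) ^ 2 ↔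
      ((∀ τ₁ ∈ C, ∀ τ₂ ∈ C, pb τ₁ = pb τ₂) ∨ γ = 0)) := by
  have hT : Nonempty T := ⟨hC.choose⟩
  set s : ℝ := 1 - γ with hsdef
  have hs0 : 0 < s := by simp only [hsdef]; linarith
  have hs1 : s ≤ 1 := by simp only [hsdef]; linarith
  set u : T → ℝ := fun τ => pb τ ^ s with hudef
  have huv : ∀ τ, u τ = pb τ ^ s := fun τ => rfl
  have hu : ∀ τ, 0 < u τ := fun τ => Real.rpow_pos_of_pos (hpos τ) s
  have hZpos : 0 < Z := by
    rw [hZ]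
    exact Finset.sum_pos
      (fun τ _ => mul_pos (Real.rpow_pos_of_pos (hpos τ) _) (Real.exp_pos _))
      Finset.univ_nonempty
  set K : ℝ := Real.exp (1 / β) / Z with hKdef
  have hKpos : 0 < K := div_pos (Real.exp_pos _) hZpos
  have hpeC : ∀ τ ∈ C, pe τ = K * u τ := by
    intro τ hτ
    rw [hpe τ, hr τ, if_pos hτ, hKdef, huv τ]
    ring
  set R := ∑ τ ∈ C, pb τ ^ 2 with hRdef
  set Q := ∑ τ ∈ C, pb τ with hQdef
  set X := ∑ τ ∈ C, u τ ^ 2 with hXdef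
  set P := ∑ τ ∈ C, u τ with hPdef
  set Y := ∑ τ ∈ C, u τ * pb τ with hYdef
  have hPpos : 0 < P := Finset.sum_pos (fun τ _ => hu τ) hC
  have hQpos : 0 < Q := Finset.sum_pos (fun τ _ => hpos τ) hC
  have hP2 : (0:ℝ) < P ^ 2 := pow_pos hPpos 2
  have hQ2 : (0:ℝ) < Q ^ 2 := pow_pos hQpos 2
  have hS1 : ∑ τ ∈ C, pe τ = K * P := by
    rw [hPdef, Finset.mul_sum]
    exact Finset.sum_congr rfl fun τ hτ => hpeC τ hτ
  have hS2 : ∑ τ ∈ C, pe τ ^ 2 = K ^ 2 * X := by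
    rw [hXdef, Finset.mul_sum]
    refine Finset.sum_congr rfl fun τ hτ => ?_
    rw [hpeC τ hτ]; ring
  have hA : X * Q ≤ Y * P := by
    rw [hXdef, hQdef, hYdef, hPdef]
    exact stmt15_sum_le C (fun τ => u τ ^ 2) pb (fun τ => u τ * pb τ) u
      (fun i _ j _ => stmt15_pairA (pb i) (pb j) s (hpos i) (hpos j) hs0.le hs1)
  have hB : Y * Q ≤ R * P := by
    rw [hYdef, hQdef, hRdef, hPdef]
    exact stmt15_sum_le C (fun τ => u τ * pb τ) pb (fun τ => pb τ ^ 2) u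
      (fun i _ j _ => stmt15_pairB (pb i) (pb j) s (hpos i) (hpos j) hs0.le hs1)
  have hmain : X * Q ^ 2 ≤ R * P ^ 2 := by
    nlinarith [mul_le_mul_of_nonneg_right hA hQpos.le,
      mul_le_mul_of_nonneg_right hB hPpos.le]
  have hstrict : (¬ ∀ τ₁ ∈ C, ∀ τ₂ ∈ C, pb τ₁ = pb τ₂) → γ ≠ 0 →
      X * Q ^ 2 < R * P ^ 2 := by
    intro hnc hg
    push_neg at hnc
    obtain ⟨τ₁, h₁, τ₂, h₂, hne⟩ := hnc
    have hs1' : s < 1 := by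
      simp only [hsdef]
      rcases lt_or_eq_of_le hγ0 with h | h
      · linarith
      · exact absurd h.symm hg
    have hB' : Y * Q < R * P := by
      rw [hYdef, hQdef, hRdef, hPdef]
      exact stmt15_sum_lt C (fun τ => u τ * pb τ) pb (fun τ => pb τ ^ 2) u
        (fun i _ j _ => stmt15_pairB (pb i) (pb j) s (hpos i) (hpos j) hs0.le hs1)
        τ₁ h₁ τ₂ h₂
        (stmt15_pairB' (pb τ₁) (pb τ₂) s (hpos τ₁) (hpos τ₂) hs0.le hs1' hne)
    nlinarith [mul_le_mul_of_nonneg_right hA hQpos.le,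
      mul_lt_mul_of_pos_right hB' hPpos]
  have hconsteq : (∀ τ₁ ∈ C, ∀ τ₂ ∈ C, pb τ₁ = pb τ₂) → X * Q ^ 2 = R * P ^ 2 := by
    intro hcst
    obtain ⟨τ₀, hτ₀⟩ := hC
    set c := pb τ₀ with hcdef
    have hconst : ∀ τ ∈ C, pb τ = c := fun τ hτ => hcst τ hτ τ₀ hτ₀
    have eX : X = C.card * (c ^ s) ^ 2 := by
      rw [hXdef]
      rw [Finset.sum_congr rfl (fun τ hτ => by rw [huv τ, hconst τ hτ] :
        ∀ τ ∈ C, u τ ^ 2 = (c ^ s) ^ 2)]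
      rw [Finset.sum_const, nsmul_eq_mul]
    have eP : P = C.card * c ^ s := by
      rw [hPdef]
      rw [Finset.sum_congr rfl (fun τ hτ => by rw [huv τ, hconst τ hτ] :
        ∀ τ ∈ C, u τ = c ^ s)]
      rw [Finset.sum_const, nsmul_eq_mul]
    have eQ : Q = C.card * c := by
      rw [hQdef]
      rw [Finset.sum_congr rfl hconst, Finset.sum_const, nsmul_eq_mul]
    have eR : R = C.card * c ^ 2 := by
      rw [hRdef]
      rw [Finset.sum_congr rfl (fun τ hτ => by rw [hconst τ hτ] :
        ∀ τ ∈ C, pb τ ^ 2 = c ^ 2)]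
      rw [Finset.sum_const, nsmul_eq_mul]
    rw [eX, eP, eQ, eR]; ring
  have hγeq : γ = 0 → X * Q ^ 2 = R * P ^ 2 := by
    intro hg
    have hs1'' : s = 1 := by simp only [hsdef]; linarith
    have hup : ∀ τ, u τ = pb τ := fun τ => by rw [huv τ, hs1'', Real.rpow_one]
    have eX : X = R := by
      rw [hXdef, hRdef]
      exact Finset.sum_congr rfl fun τ _ => by rw [hup τ]
    have eP : P = Q := by
      rw [hPdef, hQdef]
      exact Finset.sum_congr rfl fun τ _ => by rw [hup τ]
    rw [eX, eP]
  rw [hS1, hS2]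
  have hLrw : (K ^ 2 * X - (K * P) ^ 2) / (K * P) ^ 2 = X / P ^ 2 - 1 := by
    field_simp
  have hRrw : (R - Q ^ 2) / Q ^ 2 = R / Q ^ 2 - 1 := by
    field_simp
  rw [hLrw, hRrw]
  constructor
  · have h1 : X / P ^ 2 ≤ R / Q ^ 2 := (div_le_div_iff₀ hP2 hQ2).mpr hmain
    linarith
  · constructor
    · intro heq
      by_cases hg : γ = 0
      · exact Or.inr hg
      left
      by_contra hnc
      have hlt : X / P ^ 2 < R / Q ^ 2 := (div_lt_div_iff₀ hP2 hQ2).mpr (hstrict hnc hg)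
      linarith
    · intro hcase
      have he : X * Q ^ 2 = R * P ^ 2 := by
        rcases hcase with hcst | hg
        · exact hconsteq hcst
        · exact hγeq hg
      have : X / P ^ 2 = R / Q ^ 2 := (div_eq_div_iff hP2.ne' hQ2.ne').mpr he
      linarith
end

section
/- (Power transformation reduces normalized variance) Let w : S → (0,∞) on a nonempty finite set S and let 0 < α ≤ 1. Define q_α(τ) = w(τ)^α / Σ_{τ'} w(τ')^α. Then the quantity V(α) = Σ_τ q_α(τ)² is monotone: V(α) ≤ V(1), i.e., Σ_τ w(τ)^{2α}/(Σ_τ w(τ)^α)² ≤ Σ_τ w(τ)²/(Σ_τ w(τ))². -/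
open Finset

/-- Symmetrization: to compare symmetric double sums it suffices to compare
symmetrized terms pairwise. -/
lemma symm_sum_le {T : Type*} (S : Finset T) (f g : T → T → ℝ)
    (h : ∀ τ ∈ S, ∀ σ ∈ S, f τ σ + f σ τ ≤ g τ σ + g σ τ) :
    ∑ τ ∈ S, ∑ σ ∈ S, f τ σ ≤ ∑ τ ∈ S, ∑ σ ∈ S, g τ σ := by
  have h1 : ∑ τ ∈ S, ∑ σ ∈ S, (f τ σ + f σ τ) ≤ ∑ τ ∈ S, ∑ σ ∈ S, (g τ σ + g σ τ) :=
    Finset.sum_le_sum fun τ hτ => Finset.sum_le_sum fun σ hσ => h τ hτ σ hσ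
  simp only [Finset.sum_add_distrib] at h1
  have hf : ∑ τ ∈ S, ∑ σ ∈ S, f σ τ = ∑ τ ∈ S, ∑ σ ∈ S, f τ σ := Finset.sum_comm
  have hg : ∑ τ ∈ S, ∑ σ ∈ S, g σ τ = ∑ τ ∈ S, ∑ σ ∈ S, g τ σ := Finset.sum_comm
  linarith

/-- Key sign fact: `(x^α - y^α)` and `(x * y^α - y * x^α)` have signs given by `x - y`. -/
lemma key_nonneg {x y α : ℝ} (hx : 0 < x) (hy : 0 < y) (hα0 : 0 < α) (hα1 : α ≤ 1) :
    0 ≤ (x ^ α - y ^ α) * (x * y ^ α - y * x ^ α) ∧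
    0 ≤ (x - y) * (x * y ^ α - y * x ^ α) := by
  have hax : x ^ α * x ^ (1 - α) = x := by
    rw [← Real.rpow_add hx]; norm_num
  have hay : y ^ α * y ^ (1 - α) = y := by
    rw [← Real.rpow_add hy]; norm_num
  rcases le_total x y with hxy | hxy
  · have h1 : x ^ α ≤ y ^ α := Real.rpow_le_rpow hx.le hxy hα0.le
    have h2 : x ^ (1 - α) ≤ y ^ (1 - α) := Real.rpow_le_rpow hx.le hxy (by linarith)
    have h3 : x * y ^ α ≤ y * x ^ α := by
      calc x * y ^ α = x ^ α * x ^ (1 - α) * y ^ α := by rw [hax]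
        _ ≤ x ^ α * y ^ (1 - α) * y ^ α := by
            gcongr
        _ = y * x ^ α := by linear_combination x ^ α * hay
    exact ⟨by nlinarith, by nlinarith⟩
  · have h1 : y ^ α ≤ x ^ α := Real.rpow_le_rpow hy.le hxy hα0.le
    have h2 : y ^ (1 - α) ≤ x ^ (1 - α) := Real.rpow_le_rpow hy.le hxy (by linarith)
    have h3 : y * x ^ α ≤ x * y ^ α := by
      calc y * x ^ α = y ^ α * y ^ (1 - α) * x ^ α := by rw [hay]
        _ ≤ y ^ α * x ^ (1 - α) * x ^ α := by
            gcongr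
        _ = x * y ^ α := by linear_combination y ^ α * hax
    exact ⟨mul_nonneg (by linarith) (by linarith), mul_nonneg (by linarith) (by linarith)⟩

lemma aux1 {x y α : ℝ} (hx : 0 < x) (hy : 0 < y) (hα0 : 0 < α) (hα1 : α ≤ 1) :
    x ^ (2 * α) * y + y ^ (2 * α) * x ≤ x ^ (α + 1) * y ^ α + y ^ (α + 1) * x ^ α := by
  have h2x : x ^ (2 * α) = x ^ α * x ^ α := by rw [← Real.rpow_add hx]; ring_nf
  have h2y : y ^ (2 * α) = y ^ α * y ^ α := by rw [← Real.rpow_add hy]; ring_nf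
  have hx1 : x ^ (α + 1) = x ^ α * x := by rw [Real.rpow_add hx, Real.rpow_one]
  have hy1 : y ^ (α + 1) = y ^ α * y := by rw [Real.rpow_add hy, Real.rpow_one]
  have key := (key_nonneg hx hy hα0 hα1).1
  rw [h2x, h2y, hx1, hy1]
  nlinarith [key]

lemma aux2 {x y α : ℝ} (hx : 0 < x) (hy : 0 < y) (hα0 : 0 < α) (hα1 : α ≤ 1) :
    x ^ (α + 1) * y + y ^ (α + 1) * x ≤ x ^ (2 : ℝ) * y ^ α + y ^ (2 : ℝ) * x ^ α := by
  have hx1 : x ^ (α + 1) = x ^ α * x := by rw [Real.rpow_add hx, Real.rpow_one]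
  have hy1 : y ^ (α + 1) = y ^ α * y := by rw [Real.rpow_add hy, Real.rpow_one]
  have hx2 : x ^ (2 : ℝ) = x * x := by
    rw [show (2 : ℝ) = ((2 : ℕ) : ℝ) by norm_num, Real.rpow_natCast]; ring
  have hy2 : y ^ (2 : ℝ) = y * y := by
    rw [show (2 : ℝ) = ((2 : ℕ) : ℝ) by norm_num, Real.rpow_natCast]; ring
  have key := (key_nonneg hx hy hα0 hα1).2
  rw [hx1, hy1, hx2, hy2]
  nlinarith [key]

/-- Power transformation with exponent `0 < α ≤ 1` reduces the collision probability:
`Σ w^(2α)/(Σ w^α)² ≤ Σ w²/(Σ w)²`. -/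
theorem stmt16 {T : Type*} (S : Finset T) (hS : S.Nonempty) (w : T → ℝ)
    (hw : ∀ τ ∈ S, 0 < w τ) (α : ℝ) (hα0 : 0 < α) (hα1 : α ≤ 1) :
    (∑ τ ∈ S, w τ ^ (2 * α)) / (∑ τ ∈ S, w τ ^ α) ^ 2 ≤
      (∑ τ ∈ S, w τ ^ (2 : ℝ)) / (∑ τ ∈ S, w τ) ^ 2 := by
  have hA : 0 < ∑ τ ∈ S, w τ ^ α :=
    Finset.sum_pos (fun τ hτ => Real.rpow_pos_of_pos (hw τ hτ) _) hS
  have hB : 0 < ∑ τ ∈ S, w τ :=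
    Finset.sum_pos (fun τ hτ => hw τ hτ) hS
  have step1 : (∑ τ ∈ S, w τ ^ (2 * α)) * (∑ τ ∈ S, w τ) ≤
      (∑ τ ∈ S, w τ ^ (α + 1)) * (∑ τ ∈ S, w τ ^ α) := by
    rw [Finset.sum_mul_sum, Finset.sum_mul_sum]
    exact symm_sum_le S _ _ fun τ hτ σ hσ =>
      aux1 (hw τ hτ) (hw σ hσ) hα0 hα1
  have step2 : (∑ τ ∈ S, w τ ^ (α + 1)) * (∑ τ ∈ S, w τ) ≤
      (∑ τ ∈ S, w τ ^ (2 : ℝ)) * (∑ τ ∈ S, w τ ^ α) := by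
    rw [Finset.sum_mul_sum, Finset.sum_mul_sum]
    exact symm_sum_le S _ _ fun τ hτ σ hσ =>
      aux2 (hw τ hτ) (hw σ hσ) hα0 hα1
  rw [div_le_div_iff₀ (by positivity) (by positivity)]
  nlinarith [mul_le_mul_of_nonneg_right step1 hB.le,
    mul_le_mul_of_nonneg_right step2 hA.le, hA, hB]
end
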